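/- arXiv:2512.05512 — 4 statements merged into one kernel-verified Lean document; each statement's English description precedes it below -/
import Mathlib

section
/- Symmetry of the Alexander polynomial of a braid closure: let σ ∈ B_n be a braid with exponent sum |σ| (the sum of exponents when σ is written in the generators σ_i), and suppose its closure is a knot, so the polynomial Δ(t) = lim_{s→1} det(s I_n − β_n(σ))/((s−1)·[n]_t) is well-defined, where [n]_t = 1 + t + ⋯ + t^{n−1}. Then Δ(1/t) = (−t)^{−|σ|+n−1} Δ(t). -/
open LaurentPolynomial Polynomial

/-- The (unreduced) Burau matrix of the braid generator `σ_{j+1}` (0-indexed `j`) in `B_n`: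
the block matrix `I_j ⊕ [[1 - t, t], [1, 0]] ⊕ I_{n-j-2}` over `ℤ[t, t⁻¹]`. -/
noncomputable def burau (n j : ℕ) : Matrix (Fin n) (Fin n) (LaurentPolynomial ℤ) :=
  Matrix.of fun i k =>
    if i.1 = j ∧ k.1 = j then 1 - T 1
    else if i.1 = j ∧ k.1 = j + 1 then T 1
    else if i.1 = j + 1 ∧ k.1 = j then 1
    else if i.1 = j + 1 ∧ k.1 = j + 1 then 0
    else if i = k then 1 else 0

/-- The inverse of the Burau matrix of `σ_{j+1}`: the block matrix
`I_j ⊕ [[0, 1], [t⁻¹, 1 - t⁻¹]] ⊕ I_{n-j-2}` over `ℤ[t, t⁻¹]`. -/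
noncomputable def burauInv (n j : ℕ) : Matrix (Fin n) (Fin n) (LaurentPolynomial ℤ) :=
  Matrix.of fun i k =>
    if i.1 = j ∧ k.1 = j then 0
    else if i.1 = j ∧ k.1 = j + 1 then 1
    else if i.1 = j + 1 ∧ k.1 = j then T (-1)
    else if i.1 = j + 1 ∧ k.1 = j + 1 then 1 - T (-1)
    else if i = k then 1 else 0

/-- The Burau matrix of a braid word `w` (a list of generator indices with signs). -/
noncomputable def burauWord (n : ℕ) (w : List (ℕ × Bool)) :
    Matrix (Fin n) (Fin n) (LaurentPolynomial ℤ) :=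
  (w.map fun x => if x.2 then burau n x.1 else burauInv n x.1).prod

section rows
variable {n j : ℕ}

def fa (h : j + 1 < n) : Fin n := ⟨j, Nat.lt_of_succ_lt h⟩
def fb (h : j + 1 < n) : Fin n := ⟨j + 1, h⟩

lemma fa_ne_fb (h : j + 1 < n) : fa h ≠ fb h := by simp [fa, fb, Fin.ext_iff]

lemma burau_row_a (h : j + 1 < n) (m : Fin n) :
    burau n j (fa h) m = if m = fa h then 1 - T 1 else if m = fb h then T 1 else 0 := by
  obtain ⟨m, hm⟩ := m
  simp only [burau, Matrix.of_apply, fa, fb, Fin.mk.injEq, Fin.val_mk, true_and, and_true]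
  split_ifs <;> first | rfl | omega

lemma burau_row_b (h : j + 1 < n) (m : Fin n) :
    burau n j (fb h) m = if m = fa h then 1 else 0 := by
  obtain ⟨m, hm⟩ := m
  simp only [burau, Matrix.of_apply, fa, fb, Fin.mk.injEq, Fin.val_mk, true_and, and_true]
  split_ifs <;> first | rfl | omega

lemma burau_row_other (h : j + 1 < n) (i m : Fin n) (hia : i ≠ fa h) (hib : i ≠ fb h) :
    burau n j i m = if i = m then 1 else 0 := by
  obtain ⟨m, hm⟩ := m
  obtain ⟨i, hi⟩ := i
  simp only [fa, fb, Ne, Fin.mk.injEq] at hia hib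
  simp only [burau, Matrix.of_apply, Fin.mk.injEq, Fin.val_mk, true_and, and_true]
  split_ifs <;> first | rfl | omega

lemma burauInv_row_a (h : j + 1 < n) (m : Fin n) :
    burauInv n j (fa h) m = if m = fb h then 1 else 0 := by
  obtain ⟨m, hm⟩ := m
  simp only [burauInv, Matrix.of_apply, fa, fb, Fin.mk.injEq, Fin.val_mk, true_and, and_true]
  split_ifs <;> first | rfl | omega

lemma burauInv_row_b (h : j + 1 < n) (m : Fin n) :
    burauInv n j (fb h) m = if m = fa h then T (-1) else if m = fb h then 1 - T (-1) else 0 := by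
  obtain ⟨m, hm⟩ := m
  simp only [burauInv, Matrix.of_apply, fa, fb, Fin.mk.injEq, Fin.val_mk, true_and, and_true]
  split_ifs <;> first | rfl | omega

lemma burauInv_row_other (h : j + 1 < n) (i m : Fin n) (hia : i ≠ fa h) (hib : i ≠ fb h) :
    burauInv n j i m = if i = m then 1 else 0 := by
  obtain ⟨m, hm⟩ := m
  obtain ⟨i, hi⟩ := i
  simp only [fa, fb, Ne, Fin.mk.injEq] at hia hib
  simp only [burauInv, Matrix.of_apply, Fin.mk.injEq, Fin.val_mk, true_and, and_true]
  split_ifs <;> first | rfl | omega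

lemma T_mul_T_inv : (T 1 : LaurentPolynomial ℤ) * T (-1) = 1 := by
  rw [← T_add]; norm_num

lemma burau_mul_burauInv (h : j + 1 < n) : burau n j * burauInv n j = 1 := by
  refine Matrix.ext fun i k => ?_
  rw [Matrix.mul_apply, Matrix.one_apply]
  by_cases hia : i = fa h
  · subst hia
    rw [Finset.sum_eq_add_of_mem (fa h) (fb h) (Finset.mem_univ _) (Finset.mem_univ _)
      (fa_ne_fb h) (fun c _ hc => by rw [burau_row_a h, if_neg hc.1, if_neg hc.2, zero_mul])]
    rw [burau_row_a h, burau_row_a h, if_pos rfl, if_neg (Ne.symm (fa_ne_fb h)), if_pos rfl,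
      burauInv_row_a h, burauInv_row_b h]
    by_cases hk : k = fa h
    · subst hk
      rw [if_neg (fa_ne_fb h), if_pos rfl, mul_zero, zero_add, T_mul_T_inv, if_pos rfl]
    · by_cases hk' : k = fb h
      · subst hk'
        rw [if_pos rfl, if_neg (Ne.symm (fa_ne_fb h)), if_pos rfl, if_neg (fa_ne_fb h)]
        linear_combination (-1 : LaurentPolynomial ℤ) * T_mul_T_inv
      · rw [if_neg hk', if_neg hk, if_neg hk', mul_zero, mul_zero, add_zero,
          if_neg (Ne.symm hk)]
  · by_cases hib : i = fb h
    · subst hib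
      rw [Finset.sum_eq_single_of_mem (fa h) (Finset.mem_univ _)
        (fun c _ hc => by rw [burau_row_b h, if_neg hc, zero_mul])]
      rw [burau_row_b h, if_pos rfl, one_mul, burauInv_row_a h]
      by_cases hk : k = fb h
      · subst hk; simp
      · rw [if_neg hk, if_neg (Ne.symm hk)]
    · rw [Finset.sum_eq_single_of_mem i (Finset.mem_univ _)
        (fun c _ hc => by rw [burau_row_other h i c hia hib, if_neg (Ne.symm hc), zero_mul])]
      rw [burau_row_other h i i hia hib, if_pos rfl, one_mul,
        burauInv_row_other h i k hia hib]
end rows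

section omeg
variable {n j : ℕ}

lemma burauInv_mul_burau (h : j + 1 < n) : burauInv n j * burau n j = 1 := by
  refine Matrix.ext fun i k => ?_
  rw [Matrix.mul_apply, Matrix.one_apply]
  by_cases hia : i = fa h
  · subst hia
    rw [Finset.sum_eq_single_of_mem (fb h) (Finset.mem_univ _)
      (fun c _ hc => by rw [burauInv_row_a h, if_neg hc, zero_mul])]
    rw [burauInv_row_a h, if_pos rfl, one_mul, burau_row_b h]
    by_cases hk : k = fa h
    · subst hk; simp
    · rw [if_neg hk, if_neg (Ne.symm hk)]
  · by_cases hib : i = fb h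
    · subst hib
      rw [Finset.sum_eq_add_of_mem (fa h) (fb h) (Finset.mem_univ _) (Finset.mem_univ _)
        (fa_ne_fb h) (fun c _ hc => by rw [burauInv_row_b h, if_neg hc.1, if_neg hc.2, zero_mul])]
      rw [burauInv_row_b h, burauInv_row_b h, if_pos rfl, if_neg (Ne.symm (fa_ne_fb h)),
        if_pos rfl, burau_row_a h, burau_row_b h]
      by_cases hk : k = fa h
      · subst hk
        rw [if_pos rfl, if_pos rfl, if_neg (Ne.symm (fa_ne_fb h))]
        linear_combination (-1 : LaurentPolynomial ℤ) * T_mul_T_inv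
      · by_cases hk' : k = fb h
        · subst hk'
          rw [if_neg (Ne.symm (fa_ne_fb h)), if_pos rfl, if_neg (Ne.symm (fa_ne_fb h)),
            if_pos rfl, mul_zero, add_zero]
          linear_combination T_mul_T_inv
        · rw [if_neg hk, if_neg hk', if_neg hk, mul_zero, mul_zero, add_zero,
            if_neg (Ne.symm hk')]
    · rw [Finset.sum_eq_single_of_mem i (Finset.mem_univ _)
        (fun c _ hc => by rw [burauInv_row_other h i c hia hib, if_neg (Ne.symm hc), zero_mul])]
      rw [burauInv_row_other h i i hia hib, if_pos rfl, one_mul,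
        burau_row_other h i k hia hib]

/-- The lower-triangular matrix `Ω` with `1` on the diagonal and `1 - t` below. -/
noncomputable def Omeg (n : ℕ) : Matrix (Fin n) (Fin n) (LaurentPolynomial ℤ) :=
  Matrix.of fun i k => if i = k then 1 else if k.1 < i.1 then 1 - T 1 else 0

lemma omeg_aa (h : j + 1 < n) : Omeg n (fa h) (fa h) = 1 := by simp [Omeg]
lemma omeg_ab (h : j + 1 < n) : Omeg n (fa h) (fb h) = 0 := by
  simp [Omeg, fa, fb, Fin.ext_iff]
lemma omeg_ba (h : j + 1 < n) : Omeg n (fb h) (fa h) = 1 - T 1 := by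
  simp [Omeg, fa, fb, Fin.ext_iff]
lemma omeg_bb (h : j + 1 < n) : Omeg n (fb h) (fb h) = 1 := by simp [Omeg]

lemma omeg_row_ba (h : j + 1 < n) (k : Fin n) (hk : k ≠ fa h) (hk' : k ≠ fb h) :
    Omeg n (fb h) k = Omeg n (fa h) k := by
  obtain ⟨k, hkn⟩ := k
  simp only [fa, fb, Ne, Fin.mk.injEq] at hk hk'
  simp only [Omeg, Matrix.of_apply, fa, fb, Fin.mk.injEq, Fin.val_mk, Fin.ext_iff]
  split_ifs <;> first | rfl | omega

lemma omeg_col_ba (h : j + 1 < n) (i : Fin n) (hi : i ≠ fa h) (hi' : i ≠ fb h) :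
    Omeg n i (fb h) = Omeg n i (fa h) := by
  obtain ⟨i, hin⟩ := i
  simp only [fa, fb, Ne, Fin.mk.injEq] at hi hi'
  simp only [Omeg, Matrix.of_apply, fa, fb, Fin.mk.injEq, Fin.val_mk, Fin.ext_iff]
  split_ifs <;> first | rfl | omega

lemma invert_one_sub_T : (invert (1 - T 1 : LaurentPolynomial ℤ)) = 1 - T (-1) := by
  simp [map_sub, invert_T]

lemma invert_burau_mul_omeg (h : j + 1 < n) :
    (burau n j).map (⇑(LaurentPolynomial.invert (R := ℤ))) * Omeg n
      = Omeg n * (burauInv n j).transpose := by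
  refine Matrix.ext fun i k => ?_
  rw [Matrix.mul_apply, Matrix.mul_apply]
  have hL : ∀ m, (burau n j).map (⇑(LaurentPolynomial.invert (R := ℤ))) i m
      = LaurentPolynomial.invert (burau n j i m) := fun m => rfl
  -- RHS: collapse using sparsity of row k of burauInv
  have hR : ∀ m, Omeg n i m * (burauInv n j).transpose m k = Omeg n i m * burauInv n j k m :=
    fun m => rfl
  by_cases hk : k = fa h
  · subst hk
    conv_rhs => rw [Finset.sum_eq_single_of_mem (fb h) (Finset.mem_univ _)
      (fun c _ hc => by rw [hR, burauInv_row_a h, if_neg hc, mul_zero])]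
    rw [hR, burauInv_row_a h, if_pos rfl, mul_one]
    by_cases hia : i = fa h
    · subst hia
      rw [Finset.sum_eq_add_of_mem (fa h) (fb h) (Finset.mem_univ _) (Finset.mem_univ _)
        (fa_ne_fb h) (fun c _ hc => by
          rw [hL, burau_row_a h, if_neg hc.1, if_neg hc.2, map_zero, zero_mul])]
      rw [hL, hL, burau_row_a h, burau_row_a h, if_pos rfl,
        if_neg (Ne.symm (fa_ne_fb h)), if_pos rfl, invert_one_sub_T, invert_T,
        omeg_aa h, omeg_ba h, omeg_ab h]
      linear_combination (-1 : LaurentPolynomial ℤ) * T_mul_T_inv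
    · by_cases hib : i = fb h
      · subst hib
        rw [Finset.sum_eq_single_of_mem (fa h) (Finset.mem_univ _)
          (fun c _ hc => by rw [hL, burau_row_b h, if_neg hc, map_zero, zero_mul])]
        rw [hL, burau_row_b h, if_pos rfl, map_one, one_mul, omeg_aa h, omeg_bb h]
      · rw [Finset.sum_eq_single_of_mem i (Finset.mem_univ _) (fun c _ hc => by
          rw [hL, burau_row_other h i c hia hib, if_neg (Ne.symm hc), map_zero, zero_mul])]
        rw [hL, burau_row_other h i i hia hib, if_pos rfl, map_one, one_mul,
          omeg_col_ba h i hia hib]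
  · by_cases hk' : k = fb h
    · subst hk'
      conv_rhs => rw [Finset.sum_eq_add_of_mem (fa h) (fb h) (Finset.mem_univ _)
        (Finset.mem_univ _) (fa_ne_fb h) (fun c _ hc => by
          rw [hR, burauInv_row_b h, if_neg hc.1, if_neg hc.2, mul_zero])]
      rw [hR, hR, burauInv_row_b h, burauInv_row_b h, if_pos rfl,
        if_neg (Ne.symm (fa_ne_fb h)), if_pos rfl]
      by_cases hia : i = fa h
      · subst hia
        rw [Finset.sum_eq_add_of_mem (fa h) (fb h) (Finset.mem_univ _) (Finset.mem_univ _)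
          (fa_ne_fb h) (fun c _ hc => by
            rw [hL, burau_row_a h, if_neg hc.1, if_neg hc.2, map_zero, zero_mul])]
        rw [hL, hL, burau_row_a h, burau_row_a h, if_pos rfl,
          if_neg (Ne.symm (fa_ne_fb h)), if_pos rfl, invert_one_sub_T, invert_T,
          omeg_aa h, omeg_ab h, omeg_bb h]
        ring
      · by_cases hib : i = fb h
        · subst hib
          rw [Finset.sum_eq_single_of_mem (fa h) (Finset.mem_univ _)
            (fun c _ hc => by rw [hL, burau_row_b h, if_neg hc, map_zero, zero_mul])]
          rw [hL, burau_row_b h, if_pos rfl, map_one, one_mul, omeg_ab h, omeg_ba h,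
            omeg_bb h]
          linear_combination T_mul_T_inv
        · rw [Finset.sum_eq_single_of_mem i (Finset.mem_univ _) (fun c _ hc => by
            rw [hL, burau_row_other h i c hia hib, if_neg (Ne.symm hc), map_zero, zero_mul])]
          rw [hL, burau_row_other h i i hia hib, if_pos rfl, map_one, one_mul,
            omeg_col_ba h i hia hib]
          ring
    · conv_rhs => rw [Finset.sum_eq_single_of_mem k (Finset.mem_univ _) (fun c _ hc => by
        rw [hR, burauInv_row_other h k c (fun e => hk e) (fun e => hk' e),
          if_neg (Ne.symm hc), mul_zero])]
      rw [hR, burauInv_row_other h k k (fun e => hk e) (fun e => hk' e), if_pos rfl, mul_one]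
      by_cases hia : i = fa h
      · subst hia
        rw [Finset.sum_eq_add_of_mem (fa h) (fb h) (Finset.mem_univ _) (Finset.mem_univ _)
          (fa_ne_fb h) (fun c _ hc => by
            rw [hL, burau_row_a h, if_neg hc.1, if_neg hc.2, map_zero, zero_mul])]
        rw [hL, hL, burau_row_a h, burau_row_a h, if_pos rfl,
          if_neg (Ne.symm (fa_ne_fb h)), if_pos rfl, invert_one_sub_T, invert_T,
          omeg_row_ba h k hk hk']
        ring
      · by_cases hib : i = fb h
        · subst hib
          rw [Finset.sum_eq_single_of_mem (fa h) (Finset.mem_univ _)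
            (fun c _ hc => by rw [hL, burau_row_b h, if_neg hc, map_zero, zero_mul])]
          rw [hL, burau_row_b h, if_pos rfl, map_one, one_mul, omeg_row_ba h k hk hk']
        · rw [Finset.sum_eq_single_of_mem i (Finset.mem_univ _) (fun c _ hc => by
            rw [hL, burau_row_other h i c hia hib, if_neg (Ne.symm hc), map_zero, zero_mul])]
          rw [hL, burau_row_other h i i hia hib, if_pos rfl, map_one, one_mul]
end omeg

section dets
variable {n j : ℕ}

lemma det_omeg (n : ℕ) : (Omeg n).det = 1 := by
  have htri : (Omeg n).BlockTriangular OrderDual.toDual := by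
    intro i k hik
    replace hik : i < k := hik
    have h1 : i ≠ k := ne_of_lt hik
    have h2 : ¬ (k.1 < i.1) := fun hh => absurd (Fin.lt_def.mp hik) (by omega)
    simp only [Omeg, Matrix.of_apply, if_neg h1, if_neg h2]
  rw [Matrix.det_of_lowerTriangular _ htri]
  exact Finset.prod_eq_one fun i _ => by simp [Omeg]

lemma det_burau (h : j + 1 < n) : (burau n j).det = -(T 1) := by
  have hs := Matrix.det_permute (Equiv.swap (fa h) (fb h)) (burau n j)
  have htri : ((burau n j).submatrix (⇑(Equiv.swap (fa h) (fb h))) id).BlockTriangular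
      OrderDual.toDual := by
    intro i k hik
    replace hik : i < k := hik
    rw [Matrix.submatrix_apply, id]
    by_cases hia : i = fa h
    · subst hia
      rw [Equiv.swap_apply_left, burau_row_b h, if_neg fun e => absurd hik (by simp [e])]
    · by_cases hib : i = fb h
      · subst hib
        have hk1 : k ≠ fa h := by rintro rfl; revert hik; simp [Fin.lt_def, fa, fb]
        have hk2 : k ≠ fb h := by rintro rfl; exact lt_irrefl _ hik
        rw [Equiv.swap_apply_right, burau_row_a h, if_neg hk1, if_neg hk2]
      · rw [Equiv.swap_apply_of_ne_of_ne hia hib, burau_row_other h i k hia hib,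
          if_neg (ne_of_lt hik)]
  have hd := Matrix.det_of_lowerTriangular _ htri
  have hprod : ∏ i : Fin n, ((burau n j).submatrix (⇑(Equiv.swap (fa h) (fb h))) id) i i
      = T 1 := by
    rw [Finset.prod_eq_single_of_mem (fb h) (Finset.mem_univ _) ?_]
    · rw [Matrix.submatrix_apply, id, Equiv.swap_apply_right, burau_row_a h,
        if_neg (Ne.symm (fa_ne_fb h)), if_pos rfl]
    · intro c _ hc
      rw [Matrix.submatrix_apply, id]
      by_cases hca : c = fa h
      · subst hca
        rw [Equiv.swap_apply_left, burau_row_b h, if_pos rfl]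
      · rw [Equiv.swap_apply_of_ne_of_ne hca hc, burau_row_other h c c hca hc, if_pos rfl]
  rw [hprod] at hd
  rw [hd, Equiv.Perm.sign_swap (fa_ne_fb h)] at hs
  have h2 : -(burau n j).det = T 1 := by simpa using hs.symm
  linear_combination -h2

lemma det_burauInv (h : j + 1 < n) : (burauInv n j).det = -(T (-1)) := by
  have h1 : (burau n j).det * (burauInv n j).det = 1 := by
    rw [← Matrix.det_mul, burau_mul_burauInv h, Matrix.det_one]
  rw [det_burau h] at h1
  linear_combination (-(T (-1) : LaurentPolynomial ℤ)) * h1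
    + (-(burauInv n j).det) * T_mul_T_inv
end dets


section word
variable {n : ℕ}

def wordInv (w : List (ℕ × Bool)) : List (ℕ × Bool) := (w.map fun x => (x.1, !x.2)).reverse

lemma burauWord_nil : burauWord n [] = 1 := rfl

lemma burauWord_cons (x : ℕ × Bool) (w : List (ℕ × Bool)) :
    burauWord n (x :: w) = (if x.2 then burau n x.1 else burauInv n x.1) * burauWord n w := by
  simp [burauWord]

lemma burauWord_append (w₁ w₂ : List (ℕ × Bool)) :
    burauWord n (w₁ ++ w₂) = burauWord n w₁ * burauWord n w₂ := by
  simp [burauWord]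

lemma wordInv_cons (x : ℕ × Bool) (w : List (ℕ × Bool)) :
    wordInv (x :: w) = wordInv w ++ [(x.1, !x.2)] := by simp [wordInv]

lemma burauWord_mul_wordInv (w : List (ℕ × Bool)) (hw : ∀ x ∈ w, x.1 + 1 < n) :
    burauWord n w * burauWord n (wordInv w) = 1 := by
  induction w with
  | nil => simp [burauWord, wordInv]
  | cons x w ih =>
    have hx : x.1 + 1 < n := hw x List.mem_cons_self
    have hw' : ∀ y ∈ w, y.1 + 1 < n := fun y hy => hw y (List.mem_cons_of_mem x hy)
    rw [burauWord_cons, wordInv_cons, burauWord_append, mul_assoc,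
      ← mul_assoc (burauWord n w), ih hw', one_mul]
    rcases hb : x.2 with _ | _ <;>
      simp [hb, burauWord, burau_mul_burauInv hx, burauInv_mul_burau hx]

lemma map_invert_mul (A B : Matrix (Fin n) (Fin n) (LaurentPolynomial ℤ)) :
    (A * B).map (⇑(LaurentPolynomial.invert (R := ℤ)))
      = A.map (⇑(LaurentPolynomial.invert (R := ℤ)))
        * B.map (⇑(LaurentPolynomial.invert (R := ℤ))) := by
  refine Matrix.ext fun i k => ?_
  simp [Matrix.map_apply, Matrix.mul_apply, map_sum]

lemma map_invert_one :
    (1 : Matrix (Fin n) (Fin n) (LaurentPolynomial ℤ)).map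
      (⇑(LaurentPolynomial.invert (R := ℤ))) = 1 :=
  Matrix.map_one _ (map_zero _) (map_one _)

lemma invert_burauInv_mul_omeg {j : ℕ} (h : j + 1 < n) :
    (burauInv n j).map (⇑(LaurentPolynomial.invert (R := ℤ))) * Omeg n
      = Omeg n * (burau n j).transpose := by
  have h1 := invert_burau_mul_omeg h
  have h3 : (burauInv n j).transpose * (burau n j).transpose = 1 := by
    rw [← Matrix.transpose_mul, burau_mul_burauInv h, Matrix.transpose_one]
  have h2 : (burauInv n j).map (⇑(LaurentPolynomial.invert (R := ℤ)))
      * (burau n j).map (⇑(LaurentPolynomial.invert (R := ℤ))) = 1 := by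
    rw [← map_invert_mul, burauInv_mul_burau h, map_invert_one]
  calc (burauInv n j).map (⇑(LaurentPolynomial.invert (R := ℤ))) * Omeg n
      = (burauInv n j).map (⇑(LaurentPolynomial.invert (R := ℤ)))
        * (Omeg n * ((burauInv n j).transpose * (burau n j).transpose)) := by
        rw [h3, mul_one]
    _ = (burauInv n j).map (⇑(LaurentPolynomial.invert (R := ℤ)))
        * ((Omeg n * (burauInv n j).transpose) * (burau n j).transpose) := by
        rw [mul_assoc]
    _ = (burauInv n j).map (⇑(LaurentPolynomial.invert (R := ℤ)))
        * (((burau n j).map (⇑(LaurentPolynomial.invert (R := ℤ))) * Omeg n)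
          * (burau n j).transpose) := by rw [h1]
    _ = ((burauInv n j).map (⇑(LaurentPolynomial.invert (R := ℤ)))
        * (burau n j).map (⇑(LaurentPolynomial.invert (R := ℤ))))
          * (Omeg n * (burau n j).transpose) := by
        simp only [mul_assoc]
    _ = Omeg n * (burau n j).transpose := by rw [h2, one_mul]

lemma invert_burauWord_mul_omeg (w : List (ℕ × Bool)) (hw : ∀ x ∈ w, x.1 + 1 < n) :
    (burauWord n w).map (⇑(LaurentPolynomial.invert (R := ℤ))) * Omeg n
      = Omeg n * (burauWord n (wordInv w)).transpose := by
  induction w with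
  | nil =>
    rw [show wordInv [] = [] from rfl, burauWord_nil, map_invert_one,
      Matrix.transpose_one, one_mul, mul_one]
  | cons x w ih =>
    have hx : x.1 + 1 < n := hw x List.mem_cons_self
    have hw' : ∀ y ∈ w, y.1 + 1 < n := fun y hy => hw y (List.mem_cons_of_mem x hy)
    rw [burauWord_cons, wordInv_cons, map_invert_mul, mul_assoc, ih hw', ← mul_assoc]
    have hgen : (if x.2 then burau n x.1 else burauInv n x.1).map
          (⇑(LaurentPolynomial.invert (R := ℤ))) * Omeg n
        = Omeg n * (if x.2 then burauInv n x.1 else burau n x.1).transpose := by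
      rcases hb : x.2 with _ | _
      · simpa using invert_burauInv_mul_omeg hx
      · simpa using invert_burau_mul_omeg hx
    rw [hgen, mul_assoc, ← Matrix.transpose_mul, burauWord_append]
    refine congrArg (fun A => Omeg n * (burauWord n (wordInv w) * A).transpose) ?_
    rcases hb : x.2 with _ | _ <;> simp [hb, burauWord]

lemma det_burauWord (w : List (ℕ × Bool)) (hw : ∀ x ∈ w, x.1 + 1 < n) :
    (burauWord n w).det = (-(T 1)) ^ (w.filter fun x => x.2).length
      * (-(T (-1))) ^ (w.filter fun x => !x.2).length := by
  induction w with
  | nil => simp [burauWord]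
  | cons x w ih =>
    have hx : x.1 + 1 < n := hw x List.mem_cons_self
    have hw' : ∀ y ∈ w, y.1 + 1 < n := fun y hy => hw y (List.mem_cons_of_mem x hy)
    rw [burauWord_cons, Matrix.det_mul, ih hw']
    rcases hb : x.2 with _ | _
    · simp only [hb, List.filter_cons, Bool.not_false, Bool.false_eq_true, if_false, if_true,
        List.length_cons]
      rw [det_burauInv hx, pow_succ]
      ring
    · simp only [hb, List.filter_cons, Bool.not_true, Bool.true_eq_false, if_false, if_true,
        List.length_cons]
      simp only [show (false = true) = False by simp, if_false, List.length_cons]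
      rw [det_burau hx, pow_succ]
      ring
end word

section main
variable {n : ℕ}

instance : NoZeroDivisors (LaurentPolynomial ℤ) :=
  inferInstanceAs (NoZeroDivisors (AddMonoidAlgebra ℤ ℤ))

noncomputable def ivh : LaurentPolynomial ℤ →+* LaurentPolynomial ℤ :=
  (LaurentPolynomial.invert (R := ℤ)).toAlgHom.toRingHom

lemma ivh_coe : ⇑ivh = ⇑(LaurentPolynomial.invert (R := ℤ)) := rfl

lemma T_ne_zero' (k : ℤ) : (T k : LaurentPolynomial ℤ) ≠ 0 := by
  intro h0
  have h1 : (T k : LaurentPolynomial ℤ) * T (-k) = 1 := by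
    rw [← T_add, add_neg_cancel, T_zero]
  rw [h0, zero_mul] at h1
  exact zero_ne_one h1

lemma charmatrix_transpose (M : Matrix (Fin n) (Fin n) (LaurentPolynomial ℤ)) :
    Matrix.charmatrix (M.transpose) = (Matrix.charmatrix M).transpose := by
  refine Matrix.ext fun i k => ?_
  simp only [Matrix.transpose_apply, Matrix.charmatrix_apply]
  congr 1
  by_cases h : i = k
  · subst h; rfl
  · rw [Matrix.diagonal_apply_ne _ h, Matrix.diagonal_apply_ne _ (Ne.symm h)]

lemma charpoly_transpose (M : Matrix (Fin n) (Fin n) (LaurentPolynomial ℤ)) :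
    M.transpose.charpoly = M.charpoly := by
  rw [Matrix.charpoly, Matrix.charpoly, charmatrix_transpose, Matrix.det_transpose]

lemma charpoly_map_invert (w : List (ℕ × Bool)) (hw : ∀ x ∈ w, x.1 + 1 < n) :
    (burauWord n w).charpoly.map ivh = (burauWord n (wordInv w)).charpoly := by
  have hΩ := invert_burauWord_mul_omeg w hw
  set M := burauWord n w with hM
  set N := burauWord n (wordInv w) with hN
  have key : Matrix.charmatrix (M.map ⇑(LaurentPolynomial.invert (R := ℤ)))
        * (Omeg n).map ⇑(Polynomial.C : LaurentPolynomial ℤ →+* Polynomial (LaurentPolynomial ℤ))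
      = (Omeg n).map ⇑(Polynomial.C : LaurentPolynomial ℤ →+* Polynomial (LaurentPolynomial ℤ))
        * Matrix.charmatrix N.transpose := by
    have hcm : ∀ (A : Matrix (Fin n) (Fin n) (LaurentPolynomial ℤ)), Matrix.charmatrix A
        = Matrix.scalar (Fin n) (X : Polynomial (LaurentPolynomial ℤ))
          - (Polynomial.C (R := LaurentPolynomial ℤ)).mapMatrix A := fun A => rfl
    rw [hcm, hcm, Matrix.sub_mul, Matrix.mul_sub]
    congr 1
    · exact Matrix.scalar_commute (X : Polynomial (LaurentPolynomial ℤ))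
        (fun r => Commute.all _ r) _
    · rw [RingHom.mapMatrix_apply, RingHom.mapMatrix_apply, ← Matrix.map_mul, hΩ,
        Matrix.map_mul]
  have hdet := congrArg Matrix.det key
  rw [Matrix.det_mul, Matrix.det_mul] at hdet
  have hΩC : ((Omeg n).map ⇑(Polynomial.C : LaurentPolynomial ℤ →+* Polynomial (LaurentPolynomial ℤ))).det
      = 1 := by
    rw [← RingHom.mapMatrix_apply, ← RingHom.map_det, det_omeg, map_one]
  rw [hΩC, mul_one, one_mul] at hdet
  calc M.charpoly.map ivh = (M.map ⇑ivh).charpoly := (Matrix.charpoly_map M ivh).symm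
    _ = (M.map ⇑(LaurentPolynomial.invert (R := ℤ))).charpoly := by rw [ivh_coe]
    _ = N.transpose.charpoly := hdet
    _ = N.charpoly := charpoly_transpose N

lemma charpolyRev_rel (M N : Matrix (Fin n) (Fin n) (LaurentPolynomial ℤ)) (h : N * M = 1) :
    N.charpoly * Polynomial.C M.det = (-1) ^ n * M.charpoly.reverse := by
  rw [Matrix.reverse_charpoly, Matrix.charpolyRev]
  have key : Matrix.charmatrix N
        * M.map ⇑(Polynomial.C : LaurentPolynomial ℤ →+* Polynomial (LaurentPolynomial ℤ))
      = -(1 - (X : Polynomial (LaurentPolynomial ℤ))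
          • M.map ⇑(Polynomial.C : LaurentPolynomial ℤ →+* Polynomial (LaurentPolynomial ℤ))) := by
    have hcm : Matrix.charmatrix N
        = Matrix.scalar (Fin n) (X : Polynomial (LaurentPolynomial ℤ))
          - (Polynomial.C (R := LaurentPolynomial ℤ)).mapMatrix N := rfl
    rw [hcm, Matrix.sub_mul, RingHom.mapMatrix_apply, ← Matrix.map_mul, h,
      Matrix.map_one _ (map_zero _) (map_one _), Matrix.scalar_apply,
      ← Matrix.smul_eq_diagonal_mul, neg_sub]
  have hdet := congrArg Matrix.det key
  rw [Matrix.det_mul, Matrix.det_neg, Fintype.card_fin] at hdet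
  have hMC : (M.map ⇑(Polynomial.C : LaurentPolynomial ℤ →+* Polynomial (LaurentPolynomial ℤ))).det
      = Polynomial.C M.det := by rw [← RingHom.mapMatrix_apply, ← RingHom.map_det]
  rw [hMC] at hdet
  exact hdet

lemma reflect_eval_one {N : ℕ} (p : Polynomial (LaurentPolynomial ℤ)) (h : p.natDegree ≤ N) :
    (Polynomial.reflect N p).eval 1 = p.eval 1 := by
  conv_lhs => rw [p.as_sum_range' (N + 1) (Nat.lt_succ_of_le h)]
  conv_rhs => rw [p.as_sum_range' (N + 1) (Nat.lt_succ_of_le h)]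
  have hmap : ∀ s : Finset ℕ, Polynomial.reflect N (∑ i ∈ s,
        Polynomial.monomial i (p.coeff i))
      = ∑ i ∈ s, Polynomial.reflect N (Polynomial.monomial i (p.coeff i)) := by
    intro s
    induction s using Finset.induction with
    | empty => simp
    | insert _ _ hni ih =>
      rw [Finset.sum_insert hni, Finset.sum_insert hni, Polynomial.reflect_add, ih]
  rw [hmap, Polynomial.eval_finset_sum, Polynomial.eval_finset_sum]
  refine Finset.sum_congr rfl fun i hi => ?_
  rw [← Polynomial.C_mul_X_pow_eq_monomial, Polynomial.reflect_C_mul_X_pow]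
  simp

lemma sumTneg (hn : 0 < n) :
    (∑ i ∈ Finset.range n, T (-(i : ℤ)) : LaurentPolynomial ℤ)
      = T (1 - n) * ∑ i ∈ Finset.range n, T (i : ℤ) := by
  rw [Finset.mul_sum, ← Finset.sum_range_reflect (fun i => T (1 - (n : ℤ)) * T (i : ℤ)) n]
  refine Finset.sum_congr rfl fun i hi => ?_
  have hin : i < n := Finset.mem_range.mp hi
  rw [← T_add]
  congr 1
  have h2 : ((n - 1 - i : ℕ) : ℤ) = (n : ℤ) - 1 - i := by omega
  rw [h2]
  ring

lemma S_ne_zero (hn : 0 < n) :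
    (∑ i ∈ Finset.range n, T (i : ℤ) : LaurentPolynomial ℤ) ≠ 0 := by
  have hrepr : (∑ i ∈ Finset.range n, T (i : ℤ) : LaurentPolynomial ℤ)
      = Polynomial.toLaurent (∑ i ∈ Finset.range n, (Polynomial.X : Polynomial ℤ) ^ i) := by
    rw [map_sum]
    exact Finset.sum_congr rfl fun i _ => (Polynomial.toLaurent_X_pow i).symm
  rw [hrepr]
  intro h0
  have hP0 : (∑ i ∈ Finset.range n, (Polynomial.X : Polynomial ℤ) ^ i) = 0 :=
    Polynomial.toLaurent_injective (by rw [h0, map_zero])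
  have := congrArg (Polynomial.eval 1) hP0
  rw [Polynomial.eval_finset_sum] at this
  simp at this
  omega
end main

/-- Symmetry of the Alexander polynomial of a braid closure.  Let `σ ∈ B_n` be a braid word
`w` with `a` positive and `b` negative letters, so the exponent sum is `|σ| = a - b`.
Suppose the closure of `σ` is a knot, so that the characteristic polynomial
`det (s I_n - β_n(σ))` is divisible by `s - 1`, with quotient `g`, and `g.eval 1` is
divisible by `[n]_t = 1 + t + ⋯ + t^{n-1}`, with quotient the Alexander polynomial `Δ`.
Then `Δ(1/t) = (-t)^{-|σ| + n - 1} Δ(t)`, stated multiplicatively as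
`Δ(1/t) · (-t)^a = (-t)^{b + n - 1} · Δ(t)`. -/
theorem stmt6 (n : ℕ) (hn : 0 < n) (w : List (ℕ × Bool))
    (hw : ∀ x ∈ w, x.1 + 1 < n)
    (g : Polynomial (LaurentPolynomial ℤ)) (Δ : LaurentPolynomial ℤ)
    (hg : (burauWord n w).charpoly = (X - 1) * g)
    (hΔ : Δ * (∑ i ∈ Finset.range n, T (i : ℤ)) = g.eval 1) :
    LaurentPolynomial.invert Δ * (-(T 1)) ^ (w.filter fun x => x.2).length
      = (-(T 1)) ^ ((w.filter fun x => !x.2).length + (n - 1)) * Δ := by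
  classical
  set M := burauWord n w with hM
  set N := burauWord n (wordInv w) with hN
  have hMN : M * N = 1 := burauWord_mul_wordInv w hw
  have hNM : N * M = 1 := mul_eq_one_comm.mp hMN
  have hrel := charpolyRev_rel M N hNM
  have hmap := charpoly_map_invert w hw
  have hpdeg : M.charpoly.natDegree = n := by
    rw [Matrix.charpoly_natDegree_eq_dim, Fintype.card_fin]
  have hgne : g ≠ 0 := by
    intro h0
    rw [h0, mul_zero] at hg
    exact (Matrix.charpoly_monic M).ne_zero hg
  have hX1 : (X - 1 : Polynomial (LaurentPolynomial ℤ)) = X - Polynomial.C 1 := by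
    rw [map_one]
  have hXne : (X - 1 : Polynomial (LaurentPolynomial ℤ)) ≠ 0 := by
    rw [hX1]; exact Polynomial.X_sub_C_ne_zero 1
  have hgdeg : g.natDegree = n - 1 := by
    have h1 := hpdeg
    rw [hg, Polynomial.natDegree_mul hXne hgne, hX1, Polynomial.natDegree_X_sub_C] at h1
    omega
  have hrev : M.charpoly.reverse = (1 - X) * Polynomial.reflect (n - 1) g := by
    have h0 : M.charpoly.reverse = Polynomial.reflect M.charpoly.natDegree M.charpoly := rfl
    rw [h0, hpdeg, hg]
    have h1 := Polynomial.reflect_mul (f := (X - 1 : Polynomial (LaurentPolynomial ℤ)))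
      (g := g) (F := 1) (G := n - 1)
      (by rw [hX1, Polynomial.natDegree_X_sub_C]) (le_of_eq hgdeg)
    rw [show 1 + (n - 1) = n from by omega] at h1
    rw [h1]
    congr 1
    have hx1 : (X - 1 : Polynomial (LaurentPolynomial ℤ)) = X + Polynomial.C (-1) := by
      rw [map_neg, map_one]; ring
    rw [hx1, Polynomial.reflect_add, Polynomial.reflect_C, Polynomial.reflect_one_X,
      map_neg, map_one, pow_one]
    ring
  have hNchar : N.charpoly = (X - 1) * g.map ivh := by
    rw [← hmap, hg, Polynomial.map_mul, Polynomial.map_sub, Polynomial.map_X,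
      Polynomial.map_one]
  have hkey : g.map ivh * Polynomial.C M.det
      = (-1) ^ (n + 1) * Polynomial.reflect (n - 1) g := by
    have h2 : (X - 1 : Polynomial (LaurentPolynomial ℤ))
        * (g.map ivh * Polynomial.C M.det
          - (-1) ^ (n + 1) * Polynomial.reflect (n - 1) g) = 0 := by
      have h3 := hrel
      rw [hNchar, hrev] at h3
      linear_combination h3
    rcases mul_eq_zero.mp h2 with h3 | h3
    · exact absurd h3 hXne
    · exact sub_eq_zero.mp h3
  have heval := congrArg (Polynomial.eval 1) hkey
  rw [Polynomial.eval_mul, Polynomial.eval_mul, Polynomial.eval_C, Polynomial.eval_pow,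
    Polynomial.eval_neg, Polynomial.eval_one, Polynomial.eval_one_map,
    reflect_eval_one g (le_of_eq hgdeg)] at heval
  rw [← hΔ] at heval
  have hiv : ivh (Δ * (∑ i ∈ Finset.range n, T (i : ℤ)))
      = LaurentPolynomial.invert Δ
        * (T (1 - n) * (∑ i ∈ Finset.range n, T (i : ℤ))) := by
    show LaurentPolynomial.invert (Δ * (∑ i ∈ Finset.range n, T (i : ℤ))) = _
    rw [map_mul]
    congr 1
    rw [map_sum]
    calc ∑ i ∈ Finset.range n, LaurentPolynomial.invert (T (i : ℤ))
        = ∑ i ∈ Finset.range n, T (-(i : ℤ)) :=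
          Finset.sum_congr rfl fun i _ => invert_T _
      _ = _ := sumTneg hn
  rw [hiv] at heval
  have hdetM : M.det = (-(T 1)) ^ (w.filter fun x => x.2).length
      * (-(T (-1))) ^ (w.filter fun x => !x.2).length := det_burauWord w hw
  set a := (w.filter fun x => x.2).length
  set b := (w.filter fun x => !x.2).length
  set S := (∑ i ∈ Finset.range n, T (i : ℤ) : LaurentPolynomial ℤ) with hSdef
  have hSne : S ≠ 0 := S_ne_zero hn
  have hmain : LaurentPolynomial.invert Δ * T (1 - n) * ((-(T 1)) ^ a * (-(T (-1))) ^ b)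
      = (-1) ^ (n + 1) * Δ := by
    apply mul_right_cancel₀ hSne
    rw [← hdetM]
    linear_combination heval
  have hpow1 : ((-(T 1) : LaurentPolynomial ℤ)) ^ b * (-(T (-1))) ^ b = 1 := by
    rw [← mul_pow, neg_mul_neg, T_mul_T_inv, one_pow]
  have hTb : (T ((n : ℤ) - 1) : LaurentPolynomial ℤ) * T (1 - n) = 1 := by
    rw [← T_add, show ((n : ℤ) - 1) + (1 - n) = 0 by ring, T_zero]
  have hpow3 : ((-(T 1) : LaurentPolynomial ℤ)) ^ (n - 1)
      = (-1) ^ (n - 1) * T ((n : ℤ) - 1) := by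
    have hc : ((n - 1 : ℕ) : ℤ) * 1 = (n : ℤ) - 1 := by rw [mul_one]; omega
    rw [neg_pow, T_pow, hc]
  have hpow4 : ((-1 : LaurentPolynomial ℤ)) ^ (n + 1) = (-1) ^ (n - 1) := by
    rw [show n + 1 = (n - 1) + 2 from by omega, pow_add]
    ring
  apply mul_right_cancel₀ (mul_ne_zero (T_ne_zero' (1 - n))
    (pow_ne_zero b (neg_ne_zero.mpr (T_ne_zero' (-1)))))
  rw [pow_add, hpow3]
  have h6 : (T 1 : LaurentPolynomial ℤ) ^ b * T (-1) ^ b = 1 := by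
    rw [← mul_pow, T_mul_T_inv, one_pow]
  have hq : ((-1 : LaurentPolynomial ℤ)) ^ (b * 2) = 1 := by
    rw [pow_mul', neg_one_sq, one_pow]
  linear_combination hmain
    + ((-1 : LaurentPolynomial ℤ) ^ (n - 1) * Δ * T ((n : ℤ) - 1) * T (1 - n)) * hpow1
    + ((-1 : LaurentPolynomial ℤ) ^ (n - 1) * Δ) * hTb + Δ * hpow4
    + (-(2 * (-1 : LaurentPolynomial ℤ) ^ (n - 1) * Δ * T 1 ^ b * T (-1) ^ b
        * T ((n : ℤ) - 1) * T (1 - n))) * hq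
    + (-(2 * (-1 : LaurentPolynomial ℤ) ^ (n - 1) * Δ * T ((n : ℤ) - 1) * T (1 - n))) * h6
    + (-(2 * (-1 : LaurentPolynomial ℤ) ^ (n - 1) * Δ)) * hTb
end

section
/- Identity of Christoffel-type words under substitution: for coprime positive integers p < q, substituting A ↦ L and B ↦ LR into the lower Christoffel word ch_{p/q}(A,B) yields the lower Christoffel word ch_{p/(p+q)}(L,R). Equivalently, for 1 ≤ j ≤ p, the position of the j-th occurrence of R in ch_{p/(p+q)}(L,R) is j + ⌈qj/p⌉, which agrees with its position in ch_{p/q}(L,LR). -/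
open Classical in
/-- The lower Christoffel word `ch_{p/q}(A, B)` as a list of booleans (`false = A`,
`true = B`): it has length `q`, and for `1 ≤ j ≤ p` the `j`-th occurrence of `B` is at
position `⌈q j / p⌉ = (q j + p - 1) / p` (1-indexed); all other letters are `A`. -/
noncomputable def chWord (p q : ℕ) : List Bool :=
  (List.range q).map fun i =>
    if ∃ j, 1 ≤ j ∧ j ≤ p ∧ i + 1 = (q * j + p - 1) / p then true else false

/-- Substitution `A ↦ L`, `B ↦ LR` on words over `{A, B}` (`false = A = L`, `true = B`,
`R = true` in the output alphabet `{L, R}` with `L = false`). -/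
noncomputable def substLR (w : List Bool) : List Bool :=
  w.flatMap fun b => if b then [false, true] else [false]

open Classical

open Classical in
/-- Generic word whose `j`-th `true` sits at (1-indexed) position `A j`. -/
noncomputable def wordOf (A : ℕ → ℕ) (p n : ℕ) : List Bool :=
  (List.range n).map fun i =>
    if ∃ j, 1 ≤ j ∧ j ≤ p ∧ i + 1 = A j then true else false

lemma range_map_last (d : ℕ) (hd : 1 ≤ d) :
    (List.range d).map (fun t => if t = d - 1 then true else false) =
      List.replicate (d - 1) false ++ [true] := by
  obtain ⟨e, rfl⟩ : ∃ e, d = e + 1 := ⟨d - 1, by omega⟩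
  rw [List.range_succ, List.map_append]
  simp only [Nat.add_sub_cancel, List.map_cons, List.map_nil, if_pos rfl]
  congr 1
  rw [List.eq_replicate_iff]
  refine ⟨by simp, ?_⟩
  intro b hb
  simp only [List.mem_map, List.mem_range] at hb
  obtain ⟨t, ht, rfl⟩ := hb
  simp [Nat.ne_of_lt ht]

lemma wordOf_eq (A : ℕ → ℕ) (hA0 : A 0 = 0) :
    ∀ p, (∀ j, j < p → A j < A (j + 1)) →
    wordOf A p (A p) =
      (List.range p).flatMap fun j =>
        List.replicate (A (j + 1) - A j - 1) false ++ [true] := by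
  intro p
  induction p with
  | zero =>
    intro _
    simp [wordOf, hA0]
  | succ p ih =>
    intro h
    have mono : ∀ k j, j ≤ k → k ≤ p + 1 → A j ≤ A k := by
      intro k
      induction k with
      | zero =>
        intro j hj _
        obtain rfl : j = 0 := Nat.le_zero.mp hj
        exact le_rfl
      | succ k ihk =>
        intro j hj hk
        rcases Nat.eq_or_lt_of_le hj with rfl | hj'
        · exact le_rfl
        · exact le_trans (ihk j (by omega) (by omega)) (le_of_lt (h k (by omega)))
    have hAp : A p < A (p + 1) := h p (by omega)
    set d := A (p + 1) - A p with hdset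
    have hd : 1 ≤ d := by omega
    have hsplit : A (p + 1) = A p + d := by omega
    have hfirst :
        (List.range (A p)).map (fun i =>
            if ∃ j, 1 ≤ j ∧ j ≤ p + 1 ∧ i + 1 = A j then true else false) =
          wordOf A p (A p) := by
      unfold wordOf
      apply List.map_congr_left
      intro i hi
      simp only [List.mem_range] at hi
      apply if_congr _ rfl rfl
      constructor
      · rintro ⟨j, h1, h2, h3⟩
        refine ⟨j, h1, ?_, h3⟩
        rcases Nat.eq_or_lt_of_le h2 with rfl | hj'
        · omega
        · omega
      · rintro ⟨j, h1, h2, h3⟩; exact ⟨j, h1, by omega, h3⟩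
    have hsecond :
        ((List.range d).map (fun x => A p + x)).map (fun i =>
            if ∃ j, 1 ≤ j ∧ j ≤ p + 1 ∧ i + 1 = A j then true else false) =
          List.replicate (d - 1) false ++ [true] := by
      rw [List.map_map, ← range_map_last d hd]
      apply List.map_congr_left
      intro t ht
      simp only [List.mem_range] at ht
      simp only [Function.comp_apply]
      apply if_congr _ rfl rfl
      constructor
      · rintro ⟨j, h1, h2, h3⟩
        rcases Nat.eq_or_lt_of_le h2 with rfl | hj'
        · omega
        · have : A j ≤ A p := mono p j (by omega) (by omega)
          omega
      · intro ht'
        exact ⟨p + 1, by omega, le_rfl, by omega⟩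
    have hmain : wordOf A (p + 1) (A (p + 1)) =
        (List.range (A p)).map (fun i =>
            if ∃ j, 1 ≤ j ∧ j ≤ p + 1 ∧ i + 1 = A j then true else false) ++
          ((List.range d).map (fun x => A p + x)).map (fun i =>
            if ∃ j, 1 ≤ j ∧ j ≤ p + 1 ∧ i + 1 = A j then true else false) := by
      unfold wordOf
      rw [hsplit, List.range_add, List.map_append]
    rw [List.range_succ, List.flatMap_append, ← ih (fun j hj => h j (by omega)),
      hmain, hfirst, hsecond]
    simp
    omega

lemma substLR_append (l l' : List Bool) :
    substLR (l ++ l') = substLR l ++ substLR l' := by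
  unfold substLR; rw [List.flatMap_append]

lemma substLR_block (k : ℕ) :
    substLR (List.replicate k false ++ [true]) =
      List.replicate (k + 1) false ++ [true] := by
  induction k with
  | zero => simp [substLR]
  | succ k ih =>
    rw [List.replicate_succ, List.cons_append]
    have : substLR (false :: (List.replicate k false ++ [true])) =
        false :: substLR (List.replicate k false ++ [true]) := by
      unfold substLR; simp
    rw [this, ih]
    simp [List.replicate_succ]

lemma flatMap_congr' {α β : Type*} {l : List α} {f g : α → List β}
    (h : ∀ a ∈ l, f a = g a) : l.flatMap f = l.flatMap g := by
  induction l with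
  | nil => rfl
  | cons x l ih =>
    simp only [List.flatMap_cons]
    rw [h x (by simp), ih fun a ha => h a (by simp [ha])]

lemma substLR_flatMap {α : Type*} (l : List α) (g : α → List Bool) :
    substLR (l.flatMap g) = l.flatMap fun x => substLR (g x) := by
  unfold substLR; rw [List.flatMap_assoc]

/-- For coprime positive integers `p < q`, substituting `A ↦ L`, `B ↦ LR` into the lower
Christoffel word `ch_{p/q}(A,B)` yields the lower Christoffel word `ch_{p/(p+q)}(L,R)`;
equivalently, for `1 ≤ j ≤ p` the position of the `j`-th `R` in `ch_{p/(p+q)}(L,R)`,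
namely `⌈(p+q) j / p⌉`, equals `j + ⌈q j / p⌉`, its position in `ch_{p/q}(L, LR)`. -/
theorem stmt9 (p q : ℕ) (h0 : 0 < p) (hpq : p < q) (hco : Nat.Coprime p q) :
    substLR (chWord p q) = chWord p (p + q) ∧
    ∀ j, 1 ≤ j → j ≤ p →
      ((p + q) * j + p - 1) / p = j + (q * j + p - 1) / p := by
  set a : ℕ → ℕ := fun j => (q * j + p - 1) / p with ha
  set b : ℕ → ℕ := fun j => ((p + q) * j + p - 1) / p with hb
  have hb_eq : ∀ j, b j = j + a j := by
    intro j
    have h1 : (p + q) * j + p - 1 = (q * j + p - 1) + p * j := by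
      have e1 : (p + q) * j = p * j + q * j := by ring
      omega
    simp only [hb, ha]
    rw [h1, Nat.add_mul_div_left _ _ h0]
    omega
  have ha0 : a 0 = 0 := by
    simp only [ha, Nat.mul_zero, Nat.zero_add]
    exact Nat.div_eq_of_lt (by omega)
  have hb0 : b 0 = 0 := by rw [hb_eq]; omega
  have hastep : ∀ j, a j + 1 ≤ a (j + 1) := by
    intro j
    have h1 : a j + 1 = (q * j + p - 1 + p) / p := by
      rw [Nat.add_div_right _ h0]
    rw [h1]
    apply Nat.div_le_div_right
    have : q * (j + 1) = q * j + q := by ring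
    omega
  have hbstep : ∀ j, b j < b (j + 1) := by
    intro j; rw [hb_eq, hb_eq]; have := hastep j; omega
  have hap : a p = q := by
    simp only [ha]
    have h1 : q * p + p - 1 = p * q + (p - 1) := by
      have : q * p = p * q := by ring
      omega
    rw [h1, Nat.mul_add_div h0, Nat.div_eq_of_lt (by omega)]
    omega
  have hbp : b p = p + q := by rw [hb_eq, hap]
  have hch1 : chWord p q = wordOf a p q := rfl
  have hch2 : chWord p (p + q) = wordOf b p (p + q) := rfl
  constructor
  · rw [hch1, hch2, ← hbp, ← hap,
      wordOf_eq a ha0 p (fun j _ => by have := hastep j; omega),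
      wordOf_eq b hb0 p (fun j _ => hbstep j),
      substLR_flatMap]
    apply flatMap_congr'
    intro j _
    rw [substLR_block]
    have h1 : b (j + 1) - b j - 1 = a (j + 1) - a j - 1 + 1 := by
      rw [hb_eq, hb_eq]; have := hastep j; omega
    rw [h1]
  · intro j _ _
    exact hb_eq j
end

section
/- The number of tuples (p_1, q_1, …, p_r, q_r) of positive integers with r ≥ 1, p_1 > 1, q_r > 1, satisfying Σ_{j=1}^{r−1} (P_j − 1) q_j + (P_r − 1)(q_r − 1) = n (where P_j = p_1 + ⋯ + p_j), equals the number of partitions p(n) of n. -/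
/-- Given an accumulator `acc` (the sum of the earlier `p_j`'s) and the remaining list
`[(p_i, q_i), …, (p_r, q_r)]`, computes `Σ_{j=i}^{r-1} (P_j - 1) q_j + (P_r - 1)(q_r - 1)`
where `P_j = acc + p_i + ⋯ + p_j`. -/
def lorenzDegree : ℕ → List (ℕ × ℕ) → ℕ
  | _, [] => 0
  | acc, [pq] => (acc + pq.1 - 1) * (pq.2 - 1)
  | acc, pq :: rest => (acc + pq.1 - 1) * pq.2 + lorenzDegree (acc + pq.1) rest

/-- The set of tuples `(p_1, q_1, …, p_r, q_r)` of positive integers with `r ≥ 1`,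
`p_1 > 1`, `q_r > 1`, and `Σ_{j=1}^{r-1} (P_j - 1) q_j + (P_r - 1)(q_r - 1) = n`,
where `P_j = p_1 + ⋯ + p_j`. -/
def lorenzTuples (n : ℕ) : Set (List (ℕ × ℕ)) :=
  {l | l ≠ [] ∧ (∀ x ∈ l, 1 ≤ x.1 ∧ 1 ≤ x.2) ∧ 1 < l.headI.1 ∧ 1 < l.getLast!.2 ∧
    lorenzDegree 0 l = n}

namespace LorenzAux

instance : IsTrans (ℕ × ℕ) (fun a b => a.1 < b.1) :=
  ⟨fun _ _ _ h1 h2 => lt_trans h1 h2⟩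

theorem getLast!_cons_cons (a b : ℕ × ℕ) (t : List (ℕ × ℕ)) :
    (a :: b :: t).getLast! = (b :: t).getLast! := by
  rw [List.getLast!_cons_eq_getLastD, List.getLast!_cons_eq_getLastD, List.getLastD_cons]

theorem getLast!_singleton (a : ℕ × ℕ) : [a].getLast! = a := by
  simp [List.getLast!_cons_eq_getLastD]

theorem getLast!_mem {l : List (ℕ × ℕ)} (h : l ≠ []) : l.getLast! ∈ l := by
  have := List.getLast_mem (l := l) h
  rwa [List.getLast!_of_getLast? (List.getLast?_eq_getLast h)]

/-- Transform a Lorenz tuple list into a list of (part size, multiplicity) pairs. -/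
def toPairs : ℕ → List (ℕ × ℕ) → List (ℕ × ℕ)
  | _, [] => []
  | acc, [pq] => [(acc + pq.1 - 1, pq.2 - 1)]
  | acc, pq :: r :: rest => (acc + pq.1 - 1, pq.2) :: toPairs (acc + pq.1) (r :: rest)

/-- Inverse transform. -/
def fromPairs : ℕ → List (ℕ × ℕ) → List (ℕ × ℕ)
  | _, [] => []
  | acc, [md] => [(md.1 + 1 - acc, md.2 + 1)]
  | acc, md :: r :: rest => (md.1 + 1 - acc, md.2) :: fromPairs (md.1 + 1) (r :: rest)

def pairsDegree (l : List (ℕ × ℕ)) : ℕ := (l.map fun x => x.1 * x.2).sum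

theorem degree_eq : ∀ (acc : ℕ) (l : List (ℕ × ℕ)),
    lorenzDegree acc l = pairsDegree (toPairs acc l)
  | _, [] => rfl
  | acc, [pq] => by simp [lorenzDegree, toPairs, pairsDegree]
  | acc, pq :: r :: rest => by
    simp only [lorenzDegree, toPairs, pairsDegree, List.map_cons, List.sum_cons]
    rw [degree_eq (acc + pq.1) (r :: rest)]; rfl

theorem toPairs_ne_nil (acc : ℕ) (l : List (ℕ × ℕ)) (h : l ≠ []) :
    toPairs acc l ≠ [] := by
  match l with
  | [] => exact absurd rfl h
  | [pq] => simp [toPairs]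
  | pq :: r :: rest => simp [toPairs]

theorem fromPairs_ne_nil (acc : ℕ) (l : List (ℕ × ℕ)) (h : l ≠ []) :
    fromPairs acc l ≠ [] := by
  match l with
  | [] => exact absurd rfl h
  | [pq] => simp [fromPairs]
  | pq :: r :: rest => simp [fromPairs]

theorem toPairs_fst_ge : ∀ (acc : ℕ) (l : List (ℕ × ℕ)), (∀ x ∈ l, 1 ≤ x.1) →
    ∀ y ∈ toPairs acc l, acc ≤ y.1
  | _, [], _ => by simp [toPairs]
  | acc, [pq], h => by
    simp only [toPairs, List.mem_singleton]
    rintro y rfl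
    have := h pq (by simp)
    show acc ≤ acc + pq.1 - 1
    omega
  | acc, pq :: r :: rest, h => by
    simp only [toPairs, List.mem_cons]
    rintro y (rfl | hy)
    · have := h pq (by simp)
      show acc ≤ acc + pq.1 - 1
      omega
    · have := toPairs_fst_ge (acc + pq.1) (r :: rest)
        (fun x hx => h x (List.mem_cons_of_mem _ hx)) y hy
      have := h pq (by simp)
      omega

theorem toPairs_chain' : ∀ (acc : ℕ) (l : List (ℕ × ℕ)), (∀ x ∈ l, 1 ≤ x.1) →
    List.Chain' (fun a b => a.1 < b.1) (toPairs acc l)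
  | _, [], _ => by simp [toPairs]; exact List.isChain_nil
  | acc, [pq], _ => by simp [toPairs]; exact List.isChain_singleton _
  | acc, pq :: r :: rest, h => by
    simp only [toPairs]
    refine List.isChain_cons.2 ⟨?_, toPairs_chain' (acc + pq.1) (r :: rest)
      (fun x hx => h x (List.mem_cons_of_mem _ hx))⟩
    intro y hy
    have hy' := List.mem_of_mem_head? hy
    have h2 := toPairs_fst_ge (acc + pq.1) (r :: rest)
      (fun x hx => h x (List.mem_cons_of_mem _ hx)) y hy'
    have h3 := h pq (by simp)
    show (acc + pq.1 - 1, pq.2).1 < y.1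
    show acc + pq.1 - 1 < y.1
    omega

theorem toPairs_snd : ∀ (acc : ℕ) (l : List (ℕ × ℕ)), (∀ x ∈ l, 1 ≤ x.2) →
    1 < l.getLast!.2 → ∀ y ∈ toPairs acc l, 1 ≤ y.2
  | _, [], _, _ => by simp [toPairs]
  | acc, [pq], _, hlast => by
    simp only [toPairs, List.mem_singleton]
    rintro y rfl
    rw [getLast!_singleton] at hlast
    show 1 ≤ pq.2 - 1
    omega
  | acc, pq :: r :: rest, h, hlast => by
    simp only [toPairs, List.mem_cons]
    rintro y (rfl | hy)
    · exact h pq (by simp)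
    · exact toPairs_snd (acc + pq.1) (r :: rest)
        (fun x hx => h x (List.mem_cons_of_mem _ hx))
        (by rwa [getLast!_cons_cons] at hlast) y hy

theorem fromPairs_toPairs : ∀ (acc : ℕ) (l : List (ℕ × ℕ)),
    (∀ x ∈ l, 1 ≤ x.1 ∧ 1 ≤ x.2) → fromPairs acc (toPairs acc l) = l
  | _, [], _ => rfl
  | acc, [pq], h => by
    obtain ⟨h1, h2⟩ := h pq (by simp)
    simp only [toPairs, fromPairs]
    have e1 : acc + pq.1 - 1 + 1 - acc = pq.1 := by omega
    have e2 : pq.2 - 1 + 1 = pq.2 := by omega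
    rw [e1, e2]
  | acc, pq :: r :: rest, h => by
    obtain ⟨h1, h2⟩ := h pq (by simp)
    have hne : toPairs (acc + pq.1) (r :: rest) ≠ [] := toPairs_ne_nil _ _ (by simp)
    have ih := fromPairs_toPairs (acc + pq.1) (r :: rest)
      (fun x hx => h x (List.mem_cons_of_mem _ hx))
    obtain ⟨z, t, hzt⟩ := List.exists_cons_of_ne_nil hne
    simp only [toPairs, hzt]
    simp only [fromPairs]
    have e2 : acc + pq.1 - 1 + 1 = acc + pq.1 := by omega
    rw [e2, ← hzt, ih]
    have e3 : acc + pq.1 - acc = pq.1 := by omega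
    rw [e3]

theorem toPairs_fromPairs : ∀ (acc : ℕ) (l : List (ℕ × ℕ)),
    (∀ y ∈ l, acc ≤ y.1) → List.Chain' (fun a b => a.1 < b.1) l →
    toPairs acc (fromPairs acc l) = l
  | _, [], _, _ => rfl
  | acc, [md], h, _ => by
    have h1 := h md (by simp)
    simp only [fromPairs, toPairs]
    have e1 : acc + (md.1 + 1 - acc) - 1 = md.1 := by omega
    have e2 : md.2 + 1 - 1 = md.2 := by omega
    rw [e1, e2]
  | acc, md :: r :: rest, h, hc => by
    have h1 := h md (by simp)
    have hne : fromPairs (md.1 + 1) (r :: rest) ≠ [] := fromPairs_ne_nil _ _ (by simp)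
    have hpw : List.Pairwise (fun a b => a.1 < b.1) (md :: r :: rest) :=
      List.isChain_iff_pairwise.mp hc
    have htail : ∀ y ∈ r :: rest, md.1 + 1 ≤ y.1 := fun y hy => by
      have := (List.pairwise_cons.1 hpw).1 y hy; omega
    have ih := toPairs_fromPairs (md.1 + 1) (r :: rest) htail (List.isChain_cons.1 hc).2
    obtain ⟨z, t, hzt⟩ := List.exists_cons_of_ne_nil hne
    simp only [fromPairs, hzt]
    simp only [toPairs]
    have e2 : acc + (md.1 + 1 - acc) = md.1 + 1 := by omega
    rw [e2, ← hzt, ih]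
    have e3 : md.1 + 1 - 1 = md.1 := by omega
    rw [e3]

theorem fromPairs_mem : ∀ (acc : ℕ) (l : List (ℕ × ℕ)),
    (∀ y ∈ l, acc ≤ y.1) → (∀ y ∈ l, 1 ≤ y.2) →
    List.Chain' (fun a b => a.1 < b.1) l →
    ∀ x ∈ fromPairs acc l, 1 ≤ x.1 ∧ 1 ≤ x.2
  | _, [], _, _, _ => by simp [fromPairs]
  | acc, [md], h1, h2, _ => by
    simp only [fromPairs, List.mem_singleton]
    rintro x rfl
    have := h1 md (by simp)
    exact ⟨show 1 ≤ md.1 + 1 - acc by omega, show 1 ≤ md.2 + 1 by omega⟩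
  | acc, md :: r :: rest, h1, h2, hc => by
    simp only [fromPairs, List.mem_cons]
    rintro x (rfl | hx)
    · have ha := h1 md (by simp)
      have hb := h2 md (by simp)
      exact ⟨show 1 ≤ md.1 + 1 - acc by omega, hb⟩
    · have hpw : List.Pairwise (fun a b => a.1 < b.1) (md :: r :: rest) :=
        List.isChain_iff_pairwise.mp hc
      exact fromPairs_mem (md.1 + 1) (r :: rest)
        (fun y hy => by have := (List.pairwise_cons.1 hpw).1 y hy; omega)
        (fun y hy => h2 y (List.mem_cons_of_mem _ hy))
        ((List.isChain_cons.1 hc).2) x hx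

theorem fromPairs_headI : ∀ (acc : ℕ) (l : List (ℕ × ℕ)), l ≠ [] →
    (fromPairs acc l).headI.1 = l.headI.1 + 1 - acc
  | _, [], h => absurd rfl h
  | acc, [md], _ => by simp [fromPairs]
  | acc, md :: r :: rest, _ => by simp [fromPairs]

theorem fromPairs_getLast! : ∀ (acc : ℕ) (l : List (ℕ × ℕ)), l ≠ [] →
    (fromPairs acc l).getLast!.2 = l.getLast!.2 + 1
  | _, [], h => absurd rfl h
  | acc, [md], _ => by simp [fromPairs, getLast!_singleton]
  | acc, md :: r :: rest, _ => by
    simp only [fromPairs]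
    have hne : fromPairs (md.1 + 1) (r :: rest) ≠ [] := fromPairs_ne_nil _ _ (by simp)
    obtain ⟨z, t, hzt⟩ := List.exists_cons_of_ne_nil hne
    rw [hzt, getLast!_cons_cons, ← hzt, getLast!_cons_cons]
    exact fromPairs_getLast! (md.1 + 1) (r :: rest) (by simp)

/-- Strictly sorted (size, multiplicity) lists representing a partition of `n`. -/
def sortedPairs (n : ℕ) : Set (List (ℕ × ℕ)) :=
  {l | List.Chain' (fun a b => a.1 < b.1) l ∧ (∀ x ∈ l, 1 ≤ x.1 ∧ 1 ≤ x.2) ∧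
    pairsDegree l = n}

theorem toPairs_fst_pos : ∀ (acc : ℕ) (l : List (ℕ × ℕ)), (∀ x ∈ l, 1 ≤ x.1) →
    1 ≤ acc + l.headI.1 - 1 → ∀ y ∈ toPairs acc l, 1 ≤ y.1
  | _, [], _, _ => by simp [toPairs]
  | acc, [pq], h, hh => by
    simp only [toPairs, List.mem_singleton]
    rintro y rfl
    exact show 1 ≤ acc + pq.1 - 1 from by simpa using hh
  | acc, pq :: r :: rest, h, hh => by
    simp only [toPairs, List.mem_cons]
    rintro y (rfl | hy)
    · exact show 1 ≤ acc + pq.1 - 1 from by simpa using hh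
    · refine toPairs_fst_pos (acc + pq.1) (r :: rest)
        (fun x hx => h x (List.mem_cons_of_mem _ hx)) ?_ y hy
      have := h pq (by simp)
      have := h r (by simp)
      show 1 ≤ acc + pq.1 + (r :: rest).headI.1 - 1
      show 1 ≤ acc + pq.1 + r.1 - 1
      omega

/-- The bijection `lorenzTuples n ≃ sortedPairs n`. -/
noncomputable def equivPairs (n : ℕ) (hn : 0 < n) : ↥(lorenzTuples n) ≃ ↥(sortedPairs n) where
  toFun l := ⟨toPairs 0 l.1, by
    obtain ⟨hne, hmem, hhead, hlast, hdeg⟩ := l.2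
    refine ⟨toPairs_chain' 0 l.1 (fun x hx => (hmem x hx).1),
      fun y hy => ⟨toPairs_fst_pos 0 l.1 (fun x hx => (hmem x hx).1) (by omega) y hy,
        toPairs_snd 0 l.1 (fun x hx => (hmem x hx).2) hlast y hy⟩, ?_⟩
    rw [← degree_eq]; exact hdeg⟩
  invFun l := ⟨fromPairs 0 l.1, by
    obtain ⟨hc, hmem, hdeg⟩ := l.2
    have hne : l.1 ≠ [] := by
      intro h
      rw [h] at hdeg
      simp [pairsDegree] at hdeg
      omega
    have hge : ∀ y ∈ l.1, 0 ≤ y.1 := fun y _ => Nat.zero_le _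
    refine ⟨fromPairs_ne_nil 0 l.1 hne,
      fromPairs_mem 0 l.1 hge (fun y hy => (hmem y hy).2) hc, ?_, ?_, ?_⟩
    · rw [fromPairs_headI 0 l.1 hne]
      obtain ⟨z, t, hz⟩ := List.exists_cons_of_ne_nil hne
      have := (hmem z (by rw [hz]; simp)).1
      rw [hz]
      show 1 < z.1 + 1 - 0
      omega
    · rw [fromPairs_getLast! 0 l.1 hne]
      have := (hmem _ (getLast!_mem hne)).2
      omega
    · rw [degree_eq, toPairs_fromPairs 0 l.1 hge hc]
      exact hdeg⟩
  left_inv l := Subtype.ext (fromPairs_toPairs 0 l.1 l.2.2.1)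
  right_inv l := Subtype.ext (toPairs_fromPairs 0 l.1 (fun y _ => Nat.zero_le _) l.2.1)

/-- The multiset of parts encoded by a (size, multiplicity) list. -/
def toMul (l : List (ℕ × ℕ)) : Multiset ℕ :=
  (l.map fun x => Multiset.replicate x.2 x.1).sum

@[simp] theorem toMul_nil : toMul [] = 0 := rfl

@[simp] theorem toMul_cons (y : ℕ × ℕ) (t : List (ℕ × ℕ)) :
    toMul (y :: t) = Multiset.replicate y.2 y.1 + toMul t := rfl

def fromMul (s : Multiset ℕ) : List (ℕ × ℕ) :=
  (s.toFinset.sort (· ≤ ·)).map fun m => (m, s.count m)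

theorem mem_toMul {a : ℕ} {l : List (ℕ × ℕ)} :
    a ∈ toMul l ↔ ∃ x ∈ l, a = x.1 ∧ 1 ≤ x.2 := by
  induction l with
  | nil => simp
  | cons y t ih =>
    simp only [toMul_cons, Multiset.mem_add, Multiset.mem_replicate, List.mem_cons] at *
    constructor
    · rintro (⟨h1, rfl⟩ | h)
      · exact ⟨y, Or.inl rfl, rfl, by omega⟩
      · obtain ⟨x, hx, h⟩ := ih.1 h
        exact ⟨x, Or.inr hx, h⟩
    · rintro ⟨x, (rfl | hx), rfl, h2⟩
      · exact Or.inl ⟨by omega, rfl⟩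
      · exact Or.inr (ih.2 ⟨x, hx, rfl, h2⟩)

theorem toMul_sum (l : List (ℕ × ℕ)) : (toMul l).sum = pairsDegree l := by
  induction l with
  | nil => simp [pairsDegree]
  | cons y t ih =>
    simp only [toMul_cons, pairsDegree, List.map_cons, List.sum_cons, Multiset.sum_add,
      Multiset.sum_replicate, smul_eq_mul] at *
    rw [ih]
    ring_nf

theorem count_toMul_of_not_mem {m : ℕ} : ∀ {l : List (ℕ × ℕ)},
    m ∉ l.map Prod.fst → (toMul l).count m = 0 := by
  intro l
  induction l with
  | nil => simp
  | cons y t ih =>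
    intro h
    simp only [List.map_cons, List.mem_cons, not_or] at h
    rw [toMul_cons, Multiset.count_add, Multiset.count_replicate,
      if_neg (fun he => h.1 he.symm), ih h.2]

theorem count_toMul {l : List (ℕ × ℕ)} (hnd : (l.map Prod.fst).Nodup) :
    ∀ x ∈ l, (toMul l).count x.1 = x.2 := by
  induction l with
  | nil => simp
  | cons y t ih =>
    simp only [List.map_cons, List.nodup_cons] at hnd
    intro x hx
    rw [toMul_cons, Multiset.count_add, Multiset.count_replicate]
    rcases List.mem_cons.1 hx with rfl | hx
    · rw [if_pos rfl, count_toMul_of_not_mem hnd.1]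
      omega
    · have hne : y.1 ≠ x.1 := by
        intro he
        exact hnd.1 (he ▸ List.mem_map_of_mem (f := Prod.fst) hx)
      rw [if_neg hne, ih hnd.2 x hx]
      simp

theorem toFinset_toMul {l : List (ℕ × ℕ)} (h : ∀ x ∈ l, 1 ≤ x.2) :
    (toMul l).toFinset = (l.map Prod.fst).toFinset := by
  ext a
  simp only [Multiset.mem_toFinset, List.mem_toFinset, mem_toMul, List.mem_map]
  constructor
  · rintro ⟨x, hx, rfl, _⟩; exact ⟨x, hx, rfl⟩
  · rintro ⟨x, hx, rfl⟩; exact ⟨x, hx, rfl, h x hx⟩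

theorem sorted_fst {l : List (ℕ × ℕ)} (hc : List.Chain' (fun a b => a.1 < b.1) l) :
    (l.map Prod.fst).Pairwise (· < ·) := by
  rw [List.pairwise_map]
  rw [List.Chain', List.isChain_iff_pairwise] at hc
  exact hc

theorem sort_sum {β : Type*} [AddCommMonoid β] (s : Finset ℕ) (f : ℕ → β) :
    ((s.sort (· ≤ ·)).map f).sum = ∑ m ∈ s, f m := by
  rw [← Finset.sum_map_toList]
  exact List.Perm.sum_eq (List.Perm.map f (Finset.sort_perm_toList _ _))

theorem sum_sum' (A : Finset ℕ) (f : ℕ → Multiset ℕ) :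
    (∑ i ∈ A, f i).sum = ∑ i ∈ A, (f i).sum := by
  induction A using Finset.cons_induction with
  | empty => simp
  | cons a s ha ih => rw [Finset.sum_cons, Finset.sum_cons, Multiset.sum_add, ih]

theorem fromMul_toMul {l : List (ℕ × ℕ)} (hc : List.Chain' (fun a b => a.1 < b.1) l)
    (hmem : ∀ x ∈ l, 1 ≤ x.1 ∧ 1 ≤ x.2) : fromMul (toMul l) = l := by
  have hsorted := sorted_fst hc
  have hnd : (l.map Prod.fst).Nodup := hsorted.nodup
  have hfs : (toMul l).toFinset = (l.map Prod.fst).toFinset :=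
    toFinset_toMul (fun x hx => (hmem x hx).2)
  have hlist : (toMul l).toFinset.sort (· ≤ ·) = l.map Prod.fst := by
    refine List.Perm.eq_of_pairwise' (Finset.pairwise_sort _ _) (hsorted.imp le_of_lt) ?_
    refine List.perm_of_nodup_nodup_toFinset_eq (Finset.sort_nodup _ _) hnd ?_
    rw [Finset.sort_toFinset, hfs]
  rw [fromMul, hlist, List.map_map]
  have key : ∀ x ∈ l, ((fun m => (m, (toMul l).count m)) ∘ Prod.fst) x = id x := by
    intro x hx
    simp only [Function.comp_apply, id_eq]
    rw [count_toMul hnd x hx]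
  rw [List.map_congr_left key, List.map_id]

theorem toMul_fromMul (s : Multiset ℕ) : toMul (fromMul s) = s := by
  simp only [fromMul, toMul, List.map_map]
  rw [sort_sum]
  conv_rhs => rw [← Multiset.toFinset_sum_count_nsmul_eq s]
  refine Finset.sum_congr rfl fun m _ => ?_
  exact (Multiset.nsmul_singleton m (s.count m)).symm

/-- The bijection `sortedPairs n ≃ Nat.Partition n`. -/
noncomputable def equivPartition (n : ℕ) : ↥(sortedPairs n) ≃ Nat.Partition n where
  toFun l :=
    { parts := toMul l.1
      parts_pos := fun {i} hi => by
        obtain ⟨x, hx, rfl, _⟩ := mem_toMul.1 hi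
        exact (l.2.2.1 x hx).1
      parts_sum := by rw [toMul_sum]; exact l.2.2.2 }
  invFun p :=
    ⟨fromMul p.parts, by
      refine ⟨?_, ?_, ?_⟩
      · have hs := (Finset.sortedLT_sort p.parts.toFinset).pairwise
        rw [List.Chain', List.isChain_iff_pairwise, fromMul, List.pairwise_map]
        exact hs.imp (fun h => h)
      · intro x hx
        rw [fromMul, List.mem_map] at hx
        obtain ⟨m, hm, rfl⟩ := hx
        rw [Finset.mem_sort, Multiset.mem_toFinset] at hm
        exact ⟨p.parts_pos hm, Multiset.one_le_count_iff_mem.2 hm⟩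
      · rw [pairsDegree, fromMul, List.map_map, sort_sum]
        conv_rhs => rw [← p.parts_sum, ← Multiset.toFinset_sum_count_nsmul_eq p.parts]
        rw [sum_sum']
        refine Finset.sum_congr rfl fun m _ => ?_
        show m * p.parts.count m = (p.parts.count m • ({m} : Multiset ℕ)).sum
        rw [Multiset.nsmul_singleton, Multiset.sum_replicate, smul_eq_mul, Nat.mul_comm]⟩
  left_inv l := Subtype.ext (fromMul_toMul l.2.1 l.2.2.1)
  right_inv p := Nat.Partition.ext (toMul_fromMul p.parts)

end LorenzAux

/-- The number of tuples `(p_1, q_1, …, p_r, q_r)` of positive integers with `r ≥ 1`,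
`p_1 > 1`, `q_r > 1` and `Σ_{j=1}^{r-1} (P_j - 1) q_j + (P_r - 1)(q_r - 1) = n` equals the
number of partitions `p(n)` of `n`. -/
theorem stmt11 (n : ℕ) (hn : 0 < n) :
    (lorenzTuples n).ncard = Fintype.card (Nat.Partition n) := by
  have e := (LorenzAux.equivPairs n hn).trans (LorenzAux.equivPartition n)
  rw [← Nat.card_coe_set_eq, Nat.card_congr e, Nat.card_eq_fintype_card]
end

section
/- For the word-to-matrix construction realizing surjectivity onto continued fraction classes: given positive integers c_1, …, c_{2ℓ}, let γ = T^{c_1} V^{c_2} ⋯ T^{c_{2ℓ−1}} V^{c_{2ℓ}} = [[a, b],[c, d]] where T = [[1,1],[0,1]] and V = [[1,0],[1,1]]. Then c > 0, and the quadratic form Q(x,y) = c x² + (d − a) x y − b y² has positive non-square discriminant whose root w_Q = ((a − d) + √((a+d)² − 4))/(2c) is the fixed point of γ greater than 1 with purely periodic continued fraction expansion [overline{c_1, c_2, …, c_{2ℓ}}]. -/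
/-- The matrix `T = [[1,1],[0,1]] ∈ SL₂(ℤ)`. -/
def Tm : Matrix (Fin 2) (Fin 2) ℤ := !![1, 1; 0, 1]

/-- The matrix `V = [[1,0],[1,1]] ∈ SL₂(ℤ)`. -/
def Vm : Matrix (Fin 2) (Fin 2) ℤ := !![1, 0; 1, 1]

/-- Value of the finite continued fraction `c_1 + 1/(c_2 + 1/(⋯ + 1/(c_m + 1/x)))`. -/
noncomputable def cfVal : List ℕ → ℝ → ℝ
  | [], x => x
  | a :: l, x => a + (cfVal l x)⁻¹

def cfm (a : ℕ) : Matrix (Fin 2) (Fin 2) ℤ := !![(a : ℤ), 1; 1, 0]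

lemma Tm_pow (k : ℕ) : Tm ^ k = !![1, (k : ℤ); 0, 1] := by
  induction k with
  | zero => simp [Matrix.one_fin_two]
  | succ n ih =>
    rw [pow_succ, ih, Tm, Matrix.mul_fin_two]
    push_cast; norm_num [add_comm]

lemma Vm_pow (k : ℕ) : Vm ^ k = !![1, 0; (k : ℤ), 1] := by
  induction k with
  | zero => simp [Matrix.one_fin_two]
  | succ n ih =>
    rw [pow_succ, ih, Vm, Matrix.mul_fin_two]
    push_cast; norm_num [add_comm]

lemma block_eq (k m : ℕ) : Tm ^ k * Vm ^ m = cfm k * cfm m := by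
  rw [Tm_pow, Vm_pow, cfm, cfm, Matrix.mul_fin_two, Matrix.mul_fin_two]
  norm_num [add_comm]

lemma cfm_mul (k m : ℕ) : cfm k * cfm m = !![(k : ℤ) * m + 1, (k : ℤ); (m : ℤ), 1] := by
  rw [cfm, cfm, Matrix.mul_fin_two]; norm_num [add_comm]

lemma prod_eq (ℓ : ℕ) (c : ℕ → ℕ) :
    ((List.range (2 * ℓ)).map fun i => if i % 2 = 0 then Tm ^ c i else Vm ^ c i).prod
    = ((List.range (2 * ℓ)).map fun i => cfm (c i)).prod := by
  induction ℓ with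
  | zero => simp
  | succ n ih =>
    have h : 2 * (n + 1) = (2 * n + 1) + 1 := by ring
    rw [h, List.range_succ, List.range_succ, List.map_append, List.map_append,
      List.prod_append, List.prod_append, List.map_append, List.map_append,
      List.prod_append, List.prod_append, ih]
    have h0 : (2 * n) % 2 = 0 := by omega
    have h1 : (2 * n + 1) % 2 = 1 := by omega
    simp only [List.map_cons, List.map_nil, List.prod_cons, List.prod_nil, h0, h1]
    norm_num
    rw [mul_assoc, mul_assoc, block_eq]

lemma inv_lemma (c : ℕ → ℕ) : ∀ ℓ : ℕ, 1 ≤ ℓ → (∀ i < 2 * ℓ, 1 ≤ c i) →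
    (fun P : Matrix (Fin 2) (Fin 2) ℤ =>
      1 ≤ P 1 0 ∧ 1 ≤ P 1 1 ∧ P 1 0 + 1 ≤ P 0 0 ∧ P 1 1 ≤ P 0 1)
    ((List.range (2 * ℓ)).map fun i => cfm (c i)).prod := by
  intro ℓ hℓ
  induction ℓ, hℓ using Nat.le_induction with
  | base =>
    intro hc
    have h0 : 1 ≤ (c 0 : ℤ) := by exact_mod_cast hc 0 (by norm_num)
    have h1 : 1 ≤ (c 1 : ℤ) := by exact_mod_cast hc 1 (by norm_num)
    show (1 ≤ _ ∧ _)
    simp only [show 2 * 1 = 2 from rfl, List.range_succ, List.range_zero,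
      List.map_append, List.map_cons, List.map_nil, List.prod_append, List.prod_cons,
      List.prod_nil, List.nil_append, mul_one, one_mul]
    rw [cfm_mul]
    refine ⟨?_, ?_, ?_, ?_⟩ <;> simp [Matrix.cons_val_zero, Matrix.cons_val_one] <;> nlinarith
  | succ n hn ih =>
    intro hc
    have hcn : ∀ i < 2 * n, 1 ≤ c i := fun i hi => hc i (by omega)
    obtain ⟨i1, i2, i3, i4⟩ := ih hcn
    have hk : 1 ≤ (c (2 * n) : ℤ) := by exact_mod_cast hc (2 * n) (by omega)
    have hm : 1 ≤ (c (2 * n + 1) : ℤ) := by exact_mod_cast hc (2 * n + 1) (by omega)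
    have h : 2 * (n + 1) = (2 * n + 1) + 1 := by ring
    rw [h, List.range_succ, List.range_succ, List.map_append, List.map_append,
      List.prod_append, List.prod_append]
    simp only [List.map_cons, List.map_nil, List.prod_cons, List.prod_nil, mul_one]
    rw [mul_assoc, cfm_mul]
    set P := ((List.range (2 * n)).map fun i => cfm (c i)).prod with hP
    set k := (c (2 * n) : ℤ)
    set m := (c (2 * n + 1) : ℤ)
    have e : ∀ i j : Fin 2, (P * !![k * m + 1, k; m, 1]) i j
        = P i 0 * !![k * m + 1, k; m, 1] 0 j + P i 1 * !![k * m + 1, k; m, 1] 1 j := by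
      intro i j; rw [Matrix.mul_apply, Fin.sum_univ_two]
    have hkm : 1 ≤ k * m := by nlinarith
    have f1 : 1 * (k * m + 1) ≤ P 1 0 * (k * m + 1) :=
      mul_le_mul_of_nonneg_right i1 (by linarith)
    have f2 : 1 * m ≤ P 1 1 * m := mul_le_mul_of_nonneg_right i2 (by linarith)
    have f3 : (P 1 0 + 1) * (k * m + 1) ≤ P 0 0 * (k * m + 1) :=
      mul_le_mul_of_nonneg_right i3 (by linarith)
    have f4 : P 1 1 * m ≤ P 0 1 * m := mul_le_mul_of_nonneg_right i4 (by linarith)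
    have f5 : 1 * k ≤ P 1 0 * k := mul_le_mul_of_nonneg_right i1 (by linarith)
    have f6 : (P 1 0 + 1) * k ≤ P 0 0 * k := mul_le_mul_of_nonneg_right i3 (by linarith)
    refine ⟨?_, ?_, ?_, ?_⟩ <;> simp only [e] <;>
      simp [Matrix.cons_val_zero, Matrix.cons_val_one] <;> nlinarith

lemma cf_moebius (x : ℝ) (hx : 0 < x) : ∀ l : List ℕ,
    (fun N : Matrix (Fin 2) (Fin 2) ℤ =>
      0 < (N 0 0 : ℝ) * x + (N 0 1 : ℝ) ∧ 0 < (N 1 0 : ℝ) * x + (N 1 1 : ℝ) ∧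
      cfVal l x = ((N 0 0 : ℝ) * x + (N 0 1 : ℝ)) / ((N 1 0 : ℝ) * x + (N 1 1 : ℝ)))
    (l.map cfm).prod := by
  intro l
  induction l with
  | nil =>
    simp only [List.map_nil, List.prod_nil]
    refine ⟨?_, ?_, ?_⟩ <;> simp [Matrix.one_apply, cfVal] <;> linarith
  | cons a l ih =>
    obtain ⟨h1, h2, h3⟩ := ih
    simp only [List.map_cons, List.prod_cons]
    set N := (l.map cfm).prod with hN
    have e : ∀ i j : Fin 2, ((cfm a * N) i j : ℝ)
        = (cfm a i 0 : ℝ) * (N 0 j : ℝ) + (cfm a i 1 : ℝ) * (N 1 j : ℝ) := by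
      intro i j; rw [Matrix.mul_apply, Fin.sum_univ_two]; push_cast; ring
    have ha : (0 : ℝ) ≤ a := by positivity
    constructor
    · rw [e, e]; simp [cfm]; nlinarith
    constructor
    · rw [e, e]; simp [cfm]; linarith
    · rw [e, e, e, e]; simp only [cfVal, h3]
      rw [inv_div]
      simp [cfm]
      rw [eq_div_iff (by linarith : ((N 0 0 : ℝ) * x + (N 0 1 : ℝ)) ≠ 0)]
      have hne : x * (N 0 0 : ℝ) + (N 0 1 : ℝ) ≠ 0 := by linarith
      field_simp
      ring

lemma det_one_of_list : ∀ l : List (Matrix (Fin 2) (Fin 2) ℤ),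
    (∀ M ∈ l, M.det = 1) → l.prod.det = 1 := by
  intro l
  induction l with
  | nil => intro _; simp
  | cons M l ih =>
    intro h
    rw [List.prod_cons, Matrix.det_mul, h M List.mem_cons_self,
      ih (fun N hN => h N (List.mem_cons_of_mem _ hN)), one_mul]

/-- Given positive integers `c_1, …, c_{2ℓ}`, let
`γ = T^{c_1} V^{c_2} ⋯ T^{c_{2ℓ-1}} V^{c_{2ℓ}} = [[a, b], [c, d]]`.  Then `c > 0`, the
quadratic form `Q(x,y) = c x² + (d - a) x y - b y²` has positive non-square discriminant
`(a + d)² - 4`, and its root `w_Q = ((a - d) + √((a+d)² - 4))/(2c)` is the fixed point of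
the Möbius action of `γ` greater than `1`, with purely periodic continued fraction
expansion `[overline{c_1, c_2, …, c_{2ℓ}}]`. -/
theorem stmt18 (ℓ : ℕ) (hℓ : 1 ≤ ℓ) (c : ℕ → ℕ) (hc : ∀ i < 2 * ℓ, 1 ≤ c i) :
    let γ : Matrix (Fin 2) (Fin 2) ℤ :=
      ((List.range (2 * ℓ)).map fun i =>
        if i % 2 = 0 then Tm ^ c i else Vm ^ c i).prod
    let w : ℝ :=
      ((γ 0 0 - γ 1 1 : ℤ) + Real.sqrt (((γ 0 0 + γ 1 1) ^ 2 - 4 : ℤ) : ℝ)) / (2 * γ 1 0)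
    0 < γ 1 0 ∧
    0 < (γ 0 0 + γ 1 1) ^ 2 - 4 ∧
    ¬ IsSquare ((γ 0 0 + γ 1 1) ^ 2 - 4) ∧
    1 < w ∧
    ((γ 0 0 : ℝ) * w + (γ 0 1 : ℝ)) / ((γ 1 0 : ℝ) * w + (γ 1 1 : ℝ)) = w ∧
    (γ 1 0 : ℝ) * w ^ 2 + ((γ 1 1 : ℝ) - (γ 0 0 : ℝ)) * w - (γ 0 1 : ℝ) = 0 ∧
    cfVal ((List.range (2 * ℓ)).map c) w = w := by
  intro γ w
  have hγ : γ = ((List.range (2 * ℓ)).map fun i =>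
      if i % 2 = 0 then Tm ^ c i else Vm ^ c i).prod := rfl
  have hw0 : w = ((γ 0 0 - γ 1 1 : ℤ)
      + Real.sqrt (((γ 0 0 + γ 1 1) ^ 2 - 4 : ℤ) : ℝ)) / (2 * γ 1 0) := rfl
  clear_value w γ
  have hprod : γ = ((List.range (2 * ℓ)).map fun i => cfm (c i)).prod := by
    rw [hγ, prod_eq]
  have inv := inv_lemma c ℓ hℓ hc
  rw [← hprod] at inv
  obtain ⟨iC, iD, iA, iB⟩ := inv
  -- determinant
  have hdet : γ 0 0 * γ 1 1 - γ 0 1 * γ 1 0 = 1 := by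
    have h1 : γ.det = 1 := by
      rw [hγ]
      apply det_one_of_list
      intro M hM
      simp only [List.mem_map] at hM
      obtain ⟨i, _, hi⟩ := hM
      subst hi
      split_ifs <;> rw [Matrix.det_pow] <;>
        simp [Tm, Vm, Matrix.det_fin_two_of]
    rwa [Matrix.det_fin_two] at h1
  have hnsq : ¬ IsSquare ((γ 0 0 + γ 1 1) ^ 2 - 4) := by
    intro hsq
    obtain ⟨r, hr⟩ := hsq
    have habs : |r| * |r| = r * r := abs_mul_abs_self r
    rcases le_or_gt (|r|) (γ 0 0 + γ 1 1 - 1) with h | h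
    · nlinarith [abs_nonneg r]
    · nlinarith [abs_nonneg r]
  refine ⟨by linarith, by nlinarith [sq_nonneg (γ 0 0 - γ 1 1)], hnsq, ?_⟩
  -- real part
  push_cast at hw0
  set ra := (γ 0 0 : ℝ) with hra
  set rb := (γ 0 1 : ℝ) with hrb
  set rc := (γ 1 0 : ℝ) with hrc
  set rd := (γ 1 1 : ℝ) with hrd
  have jC : 1 ≤ rc := by rw [hrc]; exact_mod_cast iC
  have jD : 1 ≤ rd := by rw [hrd]; exact_mod_cast iD
  have jA : rc + 1 ≤ ra := by rw [hrc, hra]; exact_mod_cast iA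
  have jB : rd ≤ rb := by rw [hrd, hrb]; exact_mod_cast iB
  have jdet : ra * rd - rb * rc = 1 := by
    rw [hra, hrb, hrc, hrd]; exact_mod_cast hdet
  set s := Real.sqrt ((ra + rd) ^ 2 - 4) with hs
  have hw : w = ((ra - rd) + s) / (2 * rc) := by rw [hw0]
  have hnn : (0 : ℝ) ≤ (ra + rd) ^ 2 - 4 := by nlinarith
  have hs_sq : s ^ 2 = (ra + rd) ^ 2 - 4 := by
    rw [hs, Real.sq_sqrt hnn]
  have hs2 : s ^ 2 = (ra - rd) ^ 2 + 4 * rb * rc := by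
    rw [hs_sq]; linear_combination 4 * jdet
  have hs_nonneg : 0 ≤ s := Real.sqrt_nonneg _
  have hgap : s ^ 2 - (2 * rc + rd - ra) ^ 2 = 4 * rc * (ra + rb - rc - rd) := by
    rw [hs2]; ring
  have hrow : 1 ≤ ra + rb - rc - rd := by linarith
  have hgap2 : 4 ≤ s ^ 2 - (2 * rc + rd - ra) ^ 2 := by
    rw [hgap]; nlinarith
  have key : 2 * rc + rd - ra < s := by nlinarith
  have hwgt : 1 < w := by
    rw [hw, lt_div_iff₀ (by linarith : (0 : ℝ) < 2 * rc)]
    linarith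
  have hwc : w * (2 * rc) = (ra - rd) + s := by
    rw [hw]; field_simp
  have hquad : rc * w ^ 2 + (rd - ra) * w - rb = 0 := by
    have expand : (rc * w ^ 2 + (rd - ra) * w - rb) * (4 * rc)
        = (w * (2 * rc)) ^ 2 + 2 * (rd - ra) * (w * (2 * rc)) - 4 * rb * rc := by ring
    rw [hwc] at expand
    have hz : (rc * w ^ 2 + (rd - ra) * w - rb) * (4 * rc) = 0 := by
      rw [expand]; linear_combination hs2
    rcases mul_eq_zero.mp hz with h | h
    · exact h
    · exfalso; nlinarith
  have hden : 0 < rc * w + rd := by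
    have h1 : (0 : ℝ) < rc := by linarith
    have h2 : 0 < rc * w := mul_pos h1 (by linarith)
    linarith
  have hmoeb : (ra * w + rb) / (rc * w + rd) = w := by
    rw [div_eq_iff hden.ne']
    linear_combination -hquad
  refine ⟨hwgt, hmoeb, hquad, ?_⟩
  -- continued fraction
  have cf := cf_moebius w (by linarith) ((List.range (2 * ℓ)).map c)
  rw [List.map_map] at cf
  have hcomp : ((List.range (2 * ℓ)).map (cfm ∘ c)).prod = γ := by
    rw [hprod]; rfl
  rw [hcomp] at cf
  obtain ⟨_, _, h3⟩ := cf
  rw [h3]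
  exact hmoeb
end
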